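/- Let G be a finite simple graph admitting a proper 3-colouring such that every edge of G lies in exactly one triangle, and let λ = |E(G)|/3. Then for every weighted graph ℂ (finite set C with symmetric w^ℂ: C×C → ℚ≥0), the maximum over maps h: V(G) → C of ∑_{{u,v}∈E(G)} w^ℂ(h(u),h(v)) equals λ times the maximum over maps h': V(K_3) → C of ∑_{{a,b}∈E(K_3)} w^ℂ(h'(a),h'(b)). -/

import Mathlib

open Finset SimpleGraph

section Aux
variable {V : Type} (G : SimpleGraph V)
  (htri : ∀ u v, G.Adj u v → ∃! t : V, G.Adj u t ∧ G.Adj v t)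

noncomputable def apexFun [DecidableRel G.Adj] (u v : V) : V :=
  if h : G.Adj u v then (htri u v h).choose else Classical.choice ⟨u⟩

variable [DecidableRel G.Adj]

lemma apexFun_spec {u v : V} (h : G.Adj u v) :
    G.Adj u (apexFun G htri u v) ∧ G.Adj v (apexFun G htri u v) := by
  rw [apexFun, dif_pos h]; exact (htri u v h).choose_spec.1

lemma apexFun_unique {u v t : V} (h : G.Adj u v) (h1 : G.Adj u t) (h2 : G.Adj v t) :
    apexFun G htri u v = t := by
  rw [apexFun, dif_pos h]
  exact ((htri u v h).choose_spec.2 t ⟨h1, h2⟩).symm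

lemma apexFun_symm (u v : V) : apexFun G htri u v = apexFun G htri v u := by
  by_cases h : G.Adj u v
  · exact apexFun_unique G htri h (apexFun_spec G htri h.symm).2 (apexFun_spec G htri h.symm).1
  · rw [apexFun, apexFun, dif_neg h, dif_neg (fun h' => h h'.symm)]

variable [DecidableEq V]

noncomputable def triMap (e : Sym2 V) : Finset V :=
  Sym2.lift ⟨fun u v => ({u, v, apexFun G htri u v} : Finset V), by
    intro u v
    simp only []
    rw [apexFun_symm G htri u v, Finset.insert_comm]⟩ e

lemma triMap_mk (u v : V) : triMap G htri s(u, v) = {u, v, apexFun G htri u v} := rfl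

lemma triMap_mk' {u v : V} (h : G.Adj u v) :
    triMap G htri s(u, apexFun G htri u v) = {u, v, apexFun G htri u v} ∧
    triMap G htri s(v, apexFun G htri u v) = {u, v, apexFun G htri u v} := by
  set a := apexFun G htri u v with ha
  obtain ⟨h1, h2⟩ := apexFun_spec G htri h
  rw [← ha] at h1 h2
  constructor
  · rw [triMap_mk, apexFun_unique G htri h1 h h2.symm]
    ext x; simp; tauto
  · rw [triMap_mk, apexFun_unique G htri h2 h.symm h1.symm]
    ext x; simp; tauto

lemma triMap_fiber [Fintype V] {u v : V} (huv : G.Adj u v) :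
    G.edgeFinset.filter (fun e => triMap G htri e = triMap G htri s(u, v)) =
      {s(u, v), s(u, apexFun G htri u v), s(v, apexFun G htri u v)} := by
  set a := apexFun G htri u v with ha
  obtain ⟨h1, h2⟩ := apexFun_spec G htri huv
  rw [← ha] at h1 h2
  obtain ⟨t1, t2⟩ := triMap_mk' G htri huv
  rw [← ha] at t1 t2
  ext e
  simp only [Finset.mem_filter, mem_edgeFinset, Finset.mem_insert, Finset.mem_singleton]
  constructor
  · rintro ⟨he, heq⟩
    induction e with
    | _ x y =>
      rw [triMap_mk, triMap_mk] at heq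
      have hxy : G.Adj x y := he
      have hx : x ∈ ({u, v, a} : Finset V) := by rw [← heq]; simp
      have hy : y ∈ ({u, v, a} : Finset V) := by rw [← heq]; simp
      simp only [Finset.mem_insert, Finset.mem_singleton] at hx hy
      rcases hx with rfl | rfl | rfl <;> rcases hy with rfl | rfl | rfl <;>
        first
          | exact (hxy.ne rfl).elim
          | simp [Sym2.eq_swap]
  · rintro (rfl | rfl | rfl)
    · exact ⟨mem_edgeSet G |>.mpr huv, rfl⟩
    · exact ⟨mem_edgeSet G |>.mpr h1, by rw [t1, triMap_mk]⟩
    · exact ⟨mem_edgeSet G |>.mpr h2, by rw [t2, triMap_mk]⟩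


lemma fiber_struct [Fintype V] [DecidableEq V] {T : Finset V}
    (hT : T ∈ G.edgeFinset.image (triMap G htri)) :
    ∃ u v a : V, G.Adj u v ∧ G.Adj u a ∧ G.Adj v a ∧
      G.edgeFinset.filter (fun e => triMap G htri e = T) = {s(u, v), s(u, a), s(v, a)} ∧
      s(u, v) ∉ ({s(u, a), s(v, a)} : Finset (Sym2 V)) ∧
      s(u, a) ∉ ({s(v, a)} : Finset (Sym2 V)) := by
  obtain ⟨e, he, rfl⟩ := Finset.mem_image.mp hT
  induction e with
  | _ u v =>
    have huv : G.Adj u v := (mem_edgeFinset.mp he)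
    obtain ⟨h1, h2⟩ := apexFun_spec G htri huv
    refine ⟨u, v, apexFun G htri u v, huv, h1, h2, triMap_fiber G htri huv, ?_, ?_⟩
    · intro hmem
      rcases Finset.mem_insert.mp hmem with h | h
      · rcases Sym2.eq_iff.mp h with ⟨-, h⟩ | ⟨h, -⟩
        exacts [h2.ne h, h1.ne h]
      · rcases Sym2.eq_iff.mp (Finset.mem_singleton.mp h) with ⟨h, -⟩ | ⟨h, -⟩
        exacts [huv.ne h, h1.ne h]
    · intro hmem
      rcases Sym2.eq_iff.mp (Finset.mem_singleton.mp hmem) with ⟨h, -⟩ | ⟨h, -⟩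
      exacts [huv.ne h, h1.ne h]

end Aux

lemma perm_sum {C : Type} (w : C → C → ℚ) (hsymm : ∀ a b, w a b = w b a)
    (x : Fin 3 → C) {a b c : Fin 3} (hab : a ≠ b) (hac : a ≠ c) (hbc : b ≠ c) :
    w (x a) (x b) + w (x a) (x c) + w (x b) (x c) =
      w (x 0) (x 1) + w (x 0) (x 2) + w (x 1) (x 2) := by
  fin_cases a <;> fin_cases b <;> fin_cases c <;> simp_all <;>
    linarith [hsymm (x 0) (x 1), hsymm (x 0) (x 2), hsymm (x 1) (x 2)]

/-- If `G` is 3-colourable and every edge of `G` lies in exactly one triangle,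
then against every weighted graph `ℂ`,
`opt(G, ℂ) = (|E(G)|/3) · opt(K₃, ℂ)`. -/
theorem stmt_13 {V : Type} [Fintype V] [DecidableEq V]
    (G : SimpleGraph V) [DecidableRel G.Adj]
    (hcol : G.Colorable 3)
    (htri : ∀ u v, G.Adj u v → ∃! t : V, G.Adj u t ∧ G.Adj v t)
    {C : Type} [Fintype C] [Nonempty C]
    (w : C → C → ℚ) (hw : ∀ a b, 0 ≤ w a b) (hsymm : ∀ a b, w a b = w b a) :
    Finset.univ.sup' Finset.univ_nonempty
        (fun h : V → C =>
          ∑ e ∈ G.edgeFinset,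
            Sym2.lift ⟨fun u v => w (h u) (h v), fun u v => hsymm _ _⟩ e) =
      ((G.edgeFinset.card : ℚ) / 3) *
        Finset.univ.sup' Finset.univ_nonempty
          (fun h' : Fin 3 → C =>
            w (h' 0) (h' 1) + w (h' 0) (h' 2) + w (h' 1) (h' 2)) := by
  classical
  obtain ⟨c⟩ := hcol
  set F : (V → C) → Sym2 V → ℚ :=
    fun h e => Sym2.lift ⟨fun u v => w (h u) (h v), fun u v => hsymm _ _⟩ e with hF
  set M := Finset.univ.sup' Finset.univ_nonempty
    (fun h' : Fin 3 → C => w (h' 0) (h' 1) + w (h' 0) (h' 2) + w (h' 1) (h' 2)) with hMdef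
  obtain ⟨h0, -, hh0⟩ := Finset.exists_mem_eq_sup' Finset.univ_nonempty
    (fun h' : Fin 3 → C => w (h' 0) (h' 1) + w (h' 0) (h' 2) + w (h' 1) (h' 2))
  set I := G.edgeFinset.image (triMap G htri) with hI
  have hmaps : ∀ e ∈ G.edgeFinset, triMap G htri e ∈ I :=
    fun e he => Finset.mem_image_of_mem _ he
  -- fiber sums
  have hfibsum : ∀ T ∈ I, ∀ h : V → C,
      (∃ u v a : V, G.Adj u v ∧ G.Adj u a ∧ G.Adj v a ∧
        ∑ e ∈ G.edgeFinset.filter (fun e => triMap G htri e = T), F h e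
          = w (h u) (h v) + w (h u) (h a) + w (h v) (h a)) := by
    intro T hT h
    obtain ⟨u, v, a, huv, hua, hva, hfilt, hn1, hn2⟩ := fiber_struct G htri hT
    refine ⟨u, v, a, huv, hua, hva, ?_⟩
    rw [hfilt, Finset.sum_insert hn1, Finset.sum_insert hn2, Finset.sum_singleton]
    simp only [hF, Sym2.lift_mk]
    ring
  -- cardinality
  have hcard : G.edgeFinset.card = 3 * I.card := by
    rw [Finset.card_eq_sum_card_fiberwise hmaps]
    rw [Finset.sum_congr rfl (fun T hT => ?_), Finset.sum_const, smul_eq_mul, mul_comm]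
    obtain ⟨u, v, a, huv, hua, hva, hfilt, hn1, hn2⟩ := fiber_struct G htri hT
    rw [hfilt, Finset.card_insert_of_notMem hn1, Finset.card_insert_of_notMem hn2,
      Finset.card_singleton]
  have hcardQ : (G.edgeFinset.card : ℚ) / 3 = (I.card : ℚ) := by
    rw [hcard]; push_cast; ring
  -- upper bound for every h
  have hupper : ∀ h : V → C, ∑ e ∈ G.edgeFinset, F h e ≤ (I.card : ℚ) * M := by
    intro h
    rw [← Finset.sum_fiberwise_of_maps_to hmaps (F h)]
    calc ∑ T ∈ I, ∑ e ∈ G.edgeFinset.filter (fun e => triMap G htri e = T), F h e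
        ≤ ∑ T ∈ I, M := by
          refine Finset.sum_le_sum fun T hT => ?_
          obtain ⟨u, v, a, huv, hua, hva, hs⟩ := hfibsum T hT h
          rw [hs]
          have := Finset.le_sup' (fun h' : Fin 3 → C =>
            w (h' 0) (h' 1) + w (h' 0) (h' 2) + w (h' 1) (h' 2))
            (Finset.mem_univ ![h u, h v, h a])
          simp only [Matrix.cons_val_zero, Matrix.cons_val_one, Matrix.head_cons,
            Matrix.cons_val_two, Matrix.tail_cons] at this
          exact this
      _ = (I.card : ℚ) * M := by rw [Finset.sum_const, nsmul_eq_mul]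
  -- lower bound: the specific assignment
  have hlower : ∑ e ∈ G.edgeFinset, F (fun x => h0 (c x)) e = (I.card : ℚ) * M := by
    rw [← Finset.sum_fiberwise_of_maps_to hmaps (F (fun x => h0 (c x)))]
    rw [Finset.sum_congr rfl (fun T hT => ?_), Finset.sum_const, nsmul_eq_mul]
    obtain ⟨u, v, a, huv, hua, hva, hs⟩ := hfibsum T hT (fun x => h0 (c x))
    rw [hs, perm_sum w hsymm h0 (c.valid huv) (c.valid hua) (c.valid hva), ← hh0]
  rw [hcardQ]
  refine le_antisymm (Finset.sup'_le _ _ fun h _ => hupper h) ?_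
  rw [← hlower]
  exact Finset.le_sup'
    (f := fun h : V → C => ∑ e ∈ G.edgeFinset,
      Sym2.lift ⟨fun u v => w (h u) (h v), fun u v => hsymm _ _⟩ e)
    (Finset.mem_univ (fun x => h0 (c x)))
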